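/- Let X be a complete metric space and p ≥ 1. Then the finitely supported probability measures on X are dense in the metric space P_p(X) with the Wasserstein distance W_p: for every μ ∈ P_p(X) and every ε > 0 there is a Borel probability measure α on X with finite support such that W_p(μ, α) ≤ ε. -/

import Mathlib

open MeasureTheory Filter Topology
open scoped ENNReal

noncomputable section

/-- The support of a Borel measure: the set of points all of whose open
neighbourhoods have positive measure. -/
def msupport {X : Type*} [TopologicalSpace X] [MeasurableSpace X]
    (μ : Measure X) : Set X :=
  {x | ∀ U : Set X, IsOpen U → x ∈ U → 0 < μ U}

/-- `γ` is a coupling of `μ` and `ν`: its marginals along the two projections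
are `μ` and `ν` respectively. -/
def IsCoupling {X : Type*} [MeasurableSpace X]
    (γ : Measure (X × X)) (μ ν : Measure X) : Prop :=
  Measure.map Prod.fst γ = μ ∧ Measure.map Prod.snd γ = ν

/-- A measure is Radon if every Borel set is compact inner regular for it. -/
def IsRadon {X : Type*} [TopologicalSpace X] [MeasurableSpace X]
    (μ : Measure X) : Prop :=
  ∀ B : Set X, MeasurableSet B →
    μ B = ⨆ (K : Set X) (_ : IsCompact K) (_ : K ⊆ B), μ K

/-- A measure has finite moment of order `p` if `∫ d(x₀, x)^p dμ(x) < ∞` for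
some (equivalently, by the triangle inequality, every) point `x₀`. -/
def HasFiniteMoment {X : Type*} [PseudoEMetricSpace X] [MeasurableSpace X]
    (p : ℝ) (μ : Measure X) : Prop :=
  ∃ x₀ : X, ∫⁻ x, edist x₀ x ^ p ∂μ ≠ ⊤

/-- The Wasserstein distance of order `p`:
`W_p(μ, ν) = (inf_γ ∫ d(x, y)^p dγ(x, y))^{1/p}`, the infimum taken over
couplings `γ` of `μ` and `ν`. -/
def Wp {X : Type*} [PseudoEMetricSpace X] [MeasurableSpace X]
    (p : ℝ) (μ ν : Measure X) : ℝ≥0∞ :=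
  (⨅ (γ : Measure (X × X)) (_ : IsCoupling γ μ ν), ∫⁻ z, edist z.1 z.2 ^ p ∂γ) ^ (1 / p)

/-- Membership in `P_p(X)`: a Radon probability measure with finite moment of
order `p`. -/
def InPp {X : Type*} [MetricSpace X] [MeasurableSpace X] (p : ℝ) (μ : Measure X) : Prop :=
  IsProbabilityMeasure μ ∧ IsRadon μ ∧ HasFiniteMoment p μ

section Aux

open Set

/-- supremum of truncations -/
lemma iSup_min_nat (c : ℝ≥0∞) (hc : c ≠ ⊤) : ⨆ n : ℕ, min c (n : ℝ≥0∞) = c := by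
  apply le_antisymm (iSup_le fun n => min_le_left _ _)
  obtain ⟨n, hn⟩ := ENNReal.exists_nat_gt hc
  exact le_iSup_of_le n (by simp [min_eq_left hn.le])

/-- Tail bound: for a Radon probability measure and an integrable pointwise-finite
function, the integral outside a suitable compact set is small. -/
lemma tail_bound {X : Type*} [MetricSpace X] [MeasurableSpace X] [BorelSpace X]
    (μ : MeasureTheory.Measure X) [MeasureTheory.IsProbabilityMeasure μ] (hR : IsRadon μ)
    {g : X → ℝ≥0∞} (hg : Measurable g) (hgt : ∀ x, g x ≠ ⊤)
    (hfin : ∫⁻ x, g x ∂μ ≠ ⊤) {η : ℝ≥0∞} (hη : η ≠ 0) :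
    ∃ K : Set X, IsCompact K ∧ ∫⁻ x in Kᶜ, g x ∂μ ≤ η := by
  by_cases h0 : ∫⁻ x, g x ∂μ = 0
  · refine ⟨∅, isCompact_empty, ?_⟩
    rw [Set.compl_empty, MeasureTheory.Measure.restrict_univ, h0]
    exact zero_le
  · have hmeas : ∀ N : ℕ, Measurable fun x => min (g x) (N : ℝ≥0∞) :=
      fun N => hg.min measurable_const
    have hsup : ∫⁻ x, g x ∂μ = ⨆ N : ℕ, ∫⁻ x, min (g x) (N : ℝ≥0∞) ∂μ := by
      rw [← MeasureTheory.lintegral_iSup hmeas]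
      · congr 1; funext x; exact (iSup_min_nat (g x) (hgt x)).symm
      · intro m n hmn x
        exact min_le_min le_rfl (by exact_mod_cast Nat.cast_le.2 hmn)
    have hhalf : η / 2 ≠ 0 := by
      simp [ENNReal.div_ne_zero, hη]
    have hlt : ∫⁻ x, g x ∂μ - η / 2 < ⨆ N : ℕ, ∫⁻ x, min (g x) (N : ℝ≥0∞) ∂μ := by
      rw [← hsup]
      exact ENNReal.sub_lt_self hfin h0 hhalf
    obtain ⟨N, hN⟩ := lt_iSup_iff.1 hlt
    have hgNfin : ∫⁻ x, min (g x) (N : ℝ≥0∞) ∂μ ≠ ⊤ :=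
      ne_top_of_le_ne_top hfin (MeasureTheory.lintegral_mono fun x => min_le_left _ _)
    have hsub : ∫⁻ x, g x ∂μ - ∫⁻ x, min (g x) (N : ℝ≥0∞) ∂μ ≤ η / 2 := by
      rw [tsub_le_iff_right, add_comm]
      calc ∫⁻ x, g x ∂μ ≤ (∫⁻ x, g x ∂μ - η / 2) + η / 2 := le_tsub_add
        _ ≤ (∫⁻ x, min (g x) (N : ℝ≥0∞) ∂μ) + η / 2 := add_le_add_left hN.le _
    set η' : ℝ≥0∞ := η / 2 / (N + 1) with hη'def
    have hη'0 : η' ≠ 0 := by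
      rw [hη'def, ENNReal.div_ne_zero]
      exact ⟨hhalf, by simp⟩
    have h1 : (1 : ℝ≥0∞) - η' < μ Set.univ := by
      rw [MeasureTheory.measure_univ]
      exact ENNReal.sub_lt_self ENNReal.one_ne_top one_ne_zero hη'0
    rw [hR Set.univ MeasurableSet.univ] at h1
    simp only [lt_iSup_iff] at h1
    obtain ⟨K, hK, -, hKlt⟩ := h1
    have hKc : μ Kᶜ ≤ η' := by
      rw [MeasureTheory.prob_compl_eq_one_sub hK.measurableSet]
      calc (1 : ℝ≥0∞) - μ K ≤ 1 - (1 - η') := tsub_le_tsub_left hKlt.le 1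
        _ ≤ η' := tsub_tsub_le
    refine ⟨K, hK, ?_⟩
    calc ∫⁻ x in Kᶜ, g x ∂μ
        = ∫⁻ x in Kᶜ, ((g x - min (g x) (N : ℝ≥0∞)) + min (g x) (N : ℝ≥0∞)) ∂μ := by
          congr 1; funext x; rw [tsub_add_cancel_of_le (min_le_left _ _)]
      _ = (∫⁻ x in Kᶜ, (g x - min (g x) (N : ℝ≥0∞)) ∂μ)
            + ∫⁻ x in Kᶜ, min (g x) (N : ℝ≥0∞) ∂μ :=
          MeasureTheory.lintegral_add_left (hg.sub (hmeas N)) _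
      _ ≤ (∫⁻ x, (g x - min (g x) (N : ℝ≥0∞)) ∂μ) + (N : ℝ≥0∞) * μ Kᶜ := by
          refine add_le_add (MeasureTheory.setLIntegral_le_lintegral _ _) ?_
          calc ∫⁻ x in Kᶜ, min (g x) (N : ℝ≥0∞) ∂μ
              ≤ ∫⁻ _ in Kᶜ, (N : ℝ≥0∞) ∂μ :=
                MeasureTheory.lintegral_mono fun x => min_le_right _ _
            _ = (N : ℝ≥0∞) * μ Kᶜ := MeasureTheory.setLIntegral_const _ _
      _ ≤ η / 2 + ((N : ℝ≥0∞) + 1) * η' := by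
          refine add_le_add ?_ ?_
          · rw [MeasureTheory.lintegral_sub (hmeas N) hgNfin
              (Filter.Eventually.of_forall fun x => min_le_left _ _)]
            exact hsub
          · exact mul_le_mul' (le_add_right le_rfl) hKc
      _ = η / 2 + η / 2 := by
          rw [hη'def]
          congr 1
          have : ((N : ℝ≥0∞) + 1) ≠ 0 := by simp
          have ht : ((N : ℝ≥0∞) + 1) ≠ ⊤ := by simp
          exact ENNReal.mul_div_cancel this ht
      _ = η := ENNReal.add_halves η

end Aux

theorem finitely_supported_dense
    {X : Type*} [MetricSpace X] [CompleteSpace X] [MeasurableSpace X] [BorelSpace X]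
    {p : ℝ} (hp : 1 ≤ p)
    (μ : Measure X) (hμ : InPp p μ) (ε : ℝ) (hε : 0 < ε) :
    ∃ α : Measure X, IsProbabilityMeasure α ∧ (msupport α).Finite ∧
      Wp p μ α ≤ ENNReal.ofReal ε := by
  obtain ⟨hprob, hRadon, x₀, hx₀⟩ := hμ
  haveI := hprob
  have hp0 : (0 : ℝ) < p := lt_of_lt_of_le one_pos hp
  set E : ℝ≥0∞ := ENNReal.ofReal ε ^ p with hEdef
  have hE0 : E ≠ 0 := by
    refine (ENNReal.rpow_pos ?_ ENNReal.ofReal_ne_top).ne'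
    simpa using hε
  have hEhalf0 : E / 2 ≠ 0 := by
    rw [ENNReal.div_ne_zero]; exact ⟨hE0, by simp⟩
  set g : X → ℝ≥0∞ := fun x => edist x₀ x ^ p with hgdef
  have hgmeas : Measurable g := by
    have h1 : Continuous fun x : X => edist x₀ x := continuous_const.edist continuous_id
    exact (ENNReal.continuous_rpow_const.comp h1).measurable
  have hgt : ∀ x, g x ≠ ⊤ := fun x =>
    (ENNReal.rpow_lt_top_of_nonneg hp0.le (edist_ne_top _ _)).ne
  obtain ⟨K, hK, hKtail⟩ := tail_bound μ hRadon hgmeas hgt hx₀ hEhalf0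
  set δ : ℝ≥0∞ := min 1 (E / 2) with hδdef
  have hδ0 : 0 < δ := lt_min zero_lt_one (zero_lt_iff.2 hEhalf0)
  have hδp : δ ^ p ≤ E / 2 := by
    calc δ ^ p ≤ δ ^ (1 : ℝ) :=
          ENNReal.rpow_le_rpow_of_exponent_ge (min_le_left _ _) hp
      _ = δ := ENNReal.rpow_one δ
      _ ≤ E / 2 := min_le_right _ _
  obtain ⟨t, htfin, htcover⟩ := EMetric.totallyBounded_iff.1 hK.totallyBounded δ hδ0
  set t' : Set X := insert x₀ t with ht'def
  have ht'fin : t'.Finite := htfin.insert x₀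
  obtain ⟨f, hf⟩ := ht'fin.countable.exists_eq_range ⟨x₀, Set.mem_insert _ _⟩
  have hfmem : ∀ i, f i ∈ t' := fun i => hf ▸ Set.mem_range_self i
  set B : ℕ → Set X := fun i => EMetric.ball (f i) δ with hBdef
  set U : Set X := ⋃ i, B i with hUdef
  have hKU : K ⊆ U := by
    intro x hx
    obtain ⟨y, hyt, hxy⟩ := Set.mem_iUnion₂.1 (htcover hx)
    have : y ∈ Set.range f := hf ▸ Set.mem_insert_of_mem x₀ hyt
    obtain ⟨i, rfl⟩ := this
    exact Set.mem_iUnion.2 ⟨i, hxy⟩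
  set D : ℕ → Set X := disjointed B with hDdef
  have hBmeas : ∀ i, MeasurableSet (B i) := fun i => EMetric.isOpen_ball.measurableSet
  have hDmeas : ∀ i, MeasurableSet (D i) := MeasurableSet.disjointed hBmeas
  have hDdisj : Pairwise (Function.onFun Disjoint D) := disjoint_disjointed B
  have hDU : ⋃ i, D i = U := iUnion_disjointed
  have hDsub : ∀ i, D i ⊆ B i := disjointed_subset B
  have hUmeas : MeasurableSet U := MeasurableSet.iUnion hBmeas
  have hmap0 : Measurable fun x : X => (x, x₀) := measurable_id.prodMk measurable_const
  have hmapi : ∀ i, Measurable fun x : X => (x, f i) :=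
    fun i => measurable_id.prodMk measurable_const
  set γ : Measure (X × X) :=
    (μ.restrict Uᶜ).map (fun x => (x, x₀)) +
      Measure.sum (fun i => (μ.restrict (D i)).map (fun x => (x, f i))) with hγdef
  have hfst : Measure.map Prod.fst γ = μ := by
    rw [hγdef, Measure.map_add _ _ measurable_fst,
      Measure.map_sum measurable_fst.aemeasurable]
    have e0 : ((μ.restrict Uᶜ).map (fun x => (x, x₀))).map Prod.fst = μ.restrict Uᶜ := by
      rw [Measure.map_map measurable_fst hmap0]
      exact Measure.map_id
    have ei : ∀ i, ((μ.restrict (D i)).map (fun x => (x, f i))).map Prod.fst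
        = μ.restrict (D i) := by
      intro i
      rw [Measure.map_map measurable_fst (hmapi i)]
      exact Measure.map_id
    rw [e0]
    have : (Measure.sum fun i =>
        ((μ.restrict (D i)).map (fun x => (x, f i))).map Prod.fst)
        = Measure.sum fun i => μ.restrict (D i) := by
      congr 1; funext i; exact ei i
    rw [this, ← Measure.restrict_iUnion hDdisj hDmeas, hDU,
      Measure.restrict_compl_add_restrict hUmeas]
  set α : Measure X := γ.map Prod.snd with hαdef
  have hcoup : IsCoupling γ μ α := ⟨hfst, rfl⟩
  have hγuniv : γ Set.univ = 1 := by
    have h := congrArg (fun m : Measure X => m Set.univ) hfst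
    simp only [Measure.map_apply measurable_fst MeasurableSet.univ,
      Set.preimage_univ, measure_univ] at h
    exact h
  have hαprob : IsProbabilityMeasure α := by
    constructor
    rw [hαdef, Measure.map_apply measurable_snd MeasurableSet.univ,
      Set.preimage_univ, hγuniv]
  have ht'meas : MeasurableSet t'ᶜ := ht'fin.isClosed.measurableSet.compl
  have hsupp : msupport α ⊆ t' := by
    intro x hx
    by_contra hxS
    have hpre : ∀ c : X, c ∈ t' → (fun x : X => (x, c)) ⁻¹' (Prod.snd ⁻¹' t'ᶜ) = (∅ : Set X) := by
      intro c hc; ext z; simp [hc]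
    have h0 : α t'ᶜ = 0 := by
      rw [hαdef, Measure.map_apply measurable_snd ht'meas, hγdef, Measure.add_apply,
        Measure.sum_apply _ (measurable_snd ht'meas),
        Measure.map_apply hmap0 (measurable_snd ht'meas),
        hpre x₀ (Set.mem_insert _ _)]
      simp only [measure_empty, zero_add]
      have : ∀ i, ((μ.restrict (D i)).map (fun x => (x, f i))) (Prod.snd ⁻¹' t'ᶜ) = 0 := by
        intro i
        rw [Measure.map_apply (hmapi i) (measurable_snd ht'meas), hpre (f i) (hfmem i)]
        simp
      exact ENNReal.tsum_eq_zero.2 this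
    have := hx t'ᶜ ht'fin.isClosed.isOpen_compl hxS
    rw [h0] at this
    exact lt_irrefl 0 this
  have hcost : ∫⁻ z, edist z.1 z.2 ^ p ∂γ ≤ E := by
    rw [hγdef, lintegral_add_measure, lintegral_sum_measure]
    have h1 : ∫⁻ z, edist z.1 z.2 ^ p ∂((μ.restrict Uᶜ).map (fun x => (x, x₀))) ≤ E / 2 := by
      calc ∫⁻ z, edist z.1 z.2 ^ p ∂((μ.restrict Uᶜ).map (fun x => (x, x₀)))
          ≤ ∫⁻ x in Uᶜ, edist x x₀ ^ p ∂μ := lintegral_map_le _ _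
        _ = ∫⁻ x in Uᶜ, g x ∂μ := by
            simp only [hgdef]
            congr 1; funext x; rw [edist_comm]
        _ ≤ ∫⁻ x in Kᶜ, g x ∂μ :=
            lintegral_mono' (Measure.restrict_mono (Set.compl_subset_compl.2 hKU) le_rfl) le_rfl
        _ ≤ E / 2 := hKtail
    have h2 : ∑' i, ∫⁻ z, edist z.1 z.2 ^ p ∂((μ.restrict (D i)).map (fun x => (x, f i)))
        ≤ E / 2 := by
      have hi : ∀ i, ∫⁻ z, edist z.1 z.2 ^ p ∂((μ.restrict (D i)).map (fun x => (x, f i)))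
          ≤ δ ^ p * μ (D i) := by
        intro i
        calc ∫⁻ z, edist z.1 z.2 ^ p ∂((μ.restrict (D i)).map (fun x => (x, f i)))
            ≤ ∫⁻ x in D i, edist x (f i) ^ p ∂μ := lintegral_map_le _ _
          _ ≤ ∫⁻ _ in D i, δ ^ p ∂μ := by
              refine setLIntegral_mono measurable_const fun x hx => ?_
              have hxB : x ∈ B i := hDsub i hx
              have : edist x (f i) < δ := EMetric.mem_ball.1 hxB
              exact ENNReal.rpow_le_rpow this.le hp0.le
          _ = δ ^ p * μ (D i) := setLIntegral_const _ _
      calc ∑' i, ∫⁻ z, edist z.1 z.2 ^ p ∂((μ.restrict (D i)).map (fun x => (x, f i)))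
          ≤ ∑' i, δ ^ p * μ (D i) := ENNReal.tsum_le_tsum hi
        _ = δ ^ p * ∑' i, μ (D i) := ENNReal.tsum_mul_left
        _ = δ ^ p * μ U := by rw [← measure_iUnion hDdisj hDmeas, hDU]
        _ ≤ δ ^ p * 1 := mul_le_mul_right prob_le_one _
        _ ≤ E / 2 := by rw [mul_one]; exact hδp
    calc ∫⁻ z, edist z.1 z.2 ^ p ∂((μ.restrict Uᶜ).map (fun x => (x, x₀)))
          + ∑' i, ∫⁻ z, edist z.1 z.2 ^ p ∂((μ.restrict (D i)).map (fun x => (x, f i)))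
        ≤ E / 2 + E / 2 := add_le_add h1 h2
      _ = E := ENNReal.add_halves E
  refine ⟨α, hαprob, ht'fin.subset hsupp, ?_⟩
  have hWle : Wp p μ α ≤ E ^ (1 / p) := by
    refine ENNReal.rpow_le_rpow ?_ (by positivity)
    exact le_trans (iInf_le_of_le γ (iInf_le_of_le hcoup le_rfl)) hcost
  calc Wp p μ α ≤ E ^ (1 / p) := hWle
    _ = ENNReal.ofReal ε := by
      rw [hEdef, ← ENNReal.rpow_mul, mul_one_div_cancel hp0.ne', ENNReal.rpow_one]
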